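/- Let η be a binary word of length k and ℓ ≥ 1. Then the sum of |η^ℓ|_ξ² over all nonempty factors ξ of η is at least k²ℓ²/2, where η^ℓ denotes the ℓ-fold concatenation of η and |·|_ξ counts occurrences of ξ as a factor. -/

import Mathlib

open Filter

/-- Number of occurrences of `ξ` as a factor of `w` (occurrence at position `i`
means `ξ = w_{i+1}...w_{i+|ξ|}`). -/
def occ (w ξ : List Bool) : ℕ :=
  ((List.range w.length).filter (fun i => ξ.isPrefixOf (w.drop i))).length

/-- `ℓ`-fold concatenation `η^ℓ` of the word `η`. -/
def wpow (η : List Bool) (ℓ : ℕ) : List Bool := (List.replicate ℓ η).flatten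

/-- The Kamae–Xue complexity `Σ(w) = Σ_{ξ ∈ {0,1}^+} |w|_ξ²`.  Since only
factors of `w` contribute nonzero terms, the sum is taken over the (finite) set
of nonempty sublists of `w`, which contains all factors of `w`. -/
def kxSum (w : List Bool) : ℕ :=
  ∑ ξ ∈ w.sublists.toFinset.filter (fun ξ => ξ ≠ []), (occ w ξ) ^ 2

/-- `Λ(w) = max{|η|²(ℓ+1)³ : η nonempty, ℓ ≥ 1, η^ℓ a factor of w}`. -/
noncomputable def Lam (w : List Bool) : ℕ :=
  sSup {m | ∃ η ℓ, η ≠ ([] : List Bool) ∧ 1 ≤ ℓ ∧ wpow η ℓ <:+: w ∧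
    m = η.length ^ 2 * (ℓ + 1) ^ 3}

/-- A nonempty word is prime (primitive) if it is not a proper power. -/
def IsPrimeWord (η : List Bool) : Prop :=
  η ≠ [] ∧ ∀ ζ ℓ, 2 ≤ ℓ → η ≠ wpow ζ ℓ

/-- `|v|_{ξ,m}`: occurrences of `ξ` in `v` ending in the last `m` positions. -/
def occEnd (v ξ : List Bool) (m : ℕ) : ℕ :=
  ((List.range v.length).filter
    (fun i => ξ.isPrefixOf (v.drop i) && decide (v.length < i + ξ.length + m))).length

/-- The prefix `x_1 x_2 ⋯ x_n` of the infinite sequence `x`. -/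
def pref (x : ℕ → Bool) (n : ℕ) : List Bool := (List.range n).map x
lemma occ_eq_card (w ξ : List Bool) :
    occ w ξ = ((Finset.range w.length).filter (fun i => ξ.isPrefixOf (w.drop i))).card := by
  simp only [occ, Finset.filter, Finset.range, Multiset.range, Multiset.filter_coe,
    Finset.card_mk, Multiset.coe_card]
  exact congrArg _ (List.filter_congr fun i _ => by
    rw [Bool.eq_iff_iff]; simp [List.isPrefixOf_iff_prefix]).symm

lemma wpow_length (η : List Bool) (ℓ : ℕ) : (wpow η ℓ).length = ℓ * η.length := by
  simp [wpow, List.length_flatten, Function.comp]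

lemma wpow_succ (η : List Bool) (ℓ : ℕ) : wpow η (ℓ + 1) = η ++ wpow η ℓ := by
  simp [wpow, List.replicate_succ]

lemma wpow_drop (η : List Bool) : ∀ (j ℓ : ℕ), j < ℓ → ∀ r ≤ η.length,
    (wpow η ℓ).drop (j * η.length + r) = η.drop r ++ wpow η (ℓ - j - 1)
  | 0, ℓ + 1, _, r, hr => by
    rw [wpow_succ, List.drop_append, Nat.sub_eq_zero_of_le (by simpa using hr)]
    simp
  | j + 1, ℓ + 1, hj, r, hr => by
    rw [wpow_succ,
      show (j + 1) * η.length + r = η.length + (j * η.length + r) by ring,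
      List.drop_length_add_append, wpow_drop η j ℓ (by omega) r hr,
      show ℓ - j - 1 = ℓ + 1 - (j + 1) - 1 by omega]

lemma cardA (η : List Bool) (m : ℕ) :
    ((η.sublists.toFinset.filter (fun ξ => ξ ≠ [] ∧ ξ <:+: η)).filter
      (fun ξ => ξ.length = m)).card ≤ η.length - m + 1 := by
  classical
  have hsub : (η.sublists.toFinset.filter (fun ξ => ξ ≠ [] ∧ ξ <:+: η)).filter
      (fun ξ => ξ.length = m) ⊆
      (Finset.range (η.length - m + 1)).image (fun r => (η.drop r).take m) := by
    intro ξ hξ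
    simp only [Finset.mem_filter, List.mem_toFinset, List.mem_sublists] at hξ
    obtain ⟨⟨hsl, hne, hinf⟩, hlen⟩ := hξ
    obtain ⟨s, t, hst⟩ := hinf
    have hlens := congrArg List.length hst
    simp only [List.length_append] at hlens
    have hm1 : 1 ≤ ξ.length := List.length_pos_iff.2 hne
    refine Finset.mem_image.2 ⟨s.length, Finset.mem_range.2 (by omega), ?_⟩
    rw [← hst, List.append_assoc, List.drop_left, ← hlen, List.take_left]
  calc _ ≤ _ := Finset.card_le_card hsub
    _ ≤ (Finset.range (η.length - m + 1)).card := Finset.card_image_le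
    _ = η.length - m + 1 := Finset.card_range _

lemma sumB (η : List Bool) (ℓ m : ℕ) (hℓ : 1 ≤ ℓ) (hm1 : 1 ≤ m) (hmk : m ≤ η.length) :
    ℓ * (η.length - m + 1) ≤
      ∑ ξ ∈ (η.sublists.toFinset.filter (fun ξ => ξ ≠ [] ∧ ξ <:+: η)).filter
        (fun ξ => ξ.length = m), occ (wpow η ℓ) ξ := by
  classical
  set k := η.length with hk
  set w := wpow η ℓ with hw
  have hkpos : 1 ≤ k := le_trans hm1 hmk
  set S := (η.sublists.toFinset.filter (fun ξ => ξ ≠ [] ∧ ξ <:+: η)).filter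
        (fun ξ => ξ.length = m) with hSdef
  set T := ((Finset.range ℓ) ×ˢ (Finset.range (k - m + 1))).image
      (fun p : ℕ × ℕ => p.1 * k + p.2) with hT
  have hTcard : T.card = ℓ * (k - m + 1) := by
    rw [hT, Finset.card_image_of_injOn, Finset.card_product, Finset.card_range,
      Finset.card_range]
    intro p hp q hq hpq
    simp only [Finset.mem_coe, Finset.mem_product, Finset.mem_range] at hp hq
    simp only at hpq
    have h2 : p.2 < k := by omega
    have h2' : q.2 < k := by omega
    have hd : p.1 = q.1 := by
      have h1 := Nat.mul_add_div (show 0 < k by omega) p.1 p.2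
      have h1' := Nat.mul_add_div (show 0 < k by omega) q.1 q.2
      rw [Nat.div_eq_of_lt h2, add_zero] at h1
      rw [Nat.div_eq_of_lt h2', add_zero] at h1'
      rw [← h1, ← h1', mul_comm k p.1, mul_comm k q.1, hpq]
    have h2eq : p.2 = q.2 := by rw [hd] at hpq; omega
    exact Prod.ext hd h2eq
  have hsub : T ⊆ S.biUnion
      (fun ξ => (Finset.range w.length).filter (fun i => ξ.isPrefixOf (w.drop i))) := by
    intro i hi
    simp only [hT, Finset.mem_image, Finset.mem_product, Finset.mem_range] at hi
    obtain ⟨⟨j, r⟩, ⟨hj, hr⟩, rfl⟩ := hi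
    simp only at hr hj ⊢
    have hrk : r + m ≤ k := by omega
    have hpre : (η.drop r).take m <+: η.drop r := List.take_prefix m _
    have hlen : ((η.drop r).take m).length = m := by
      simp only [List.length_take, List.length_drop]; omega
    have hinf : (η.drop r).take m <:+: η := hpre.isInfix.trans (List.drop_suffix r η).isInfix
    refine Finset.mem_biUnion.2 ⟨(η.drop r).take m, ?_, ?_⟩
    · refine Finset.mem_filter.2 ⟨Finset.mem_filter.2 ⟨?_, ?_, hinf⟩, hlen⟩
      · exact List.mem_toFinset.2 (List.mem_sublists.2 hinf.sublist)
      · intro h; rw [h] at hlen; simp at hlen; omega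
    · refine Finset.mem_filter.2 ⟨Finset.mem_range.2 ?_, ?_⟩
      · rw [hw, wpow_length, ← hk]
        have h1 : j * k + r < j * k + k := by omega
        have h2 : j * k + k = (j + 1) * k := by ring
        have h3 : (j + 1) * k ≤ ℓ * k := Nat.mul_le_mul_right k (by omega)
        omega
      · rw [List.isPrefixOf_iff_prefix, hw, wpow_drop η j ℓ hj r (by omega)]
        exact hpre.trans (List.prefix_append _ _)
  calc ℓ * (k - m + 1) = T.card := hTcard.symm
    _ ≤ _ := Finset.card_le_card hsub
    _ ≤ ∑ ξ ∈ S, ((Finset.range w.length).filter (fun i => ξ.isPrefixOf (w.drop i))).card :=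
        Finset.card_biUnion_le
    _ = ∑ ξ ∈ S, occ w ξ := Finset.sum_congr rfl fun ξ _ => (occ_eq_card w ξ).symm

lemma key_bound (η : List Bool) (ℓ m : ℕ) (hℓ : 1 ≤ ℓ) (hm1 : 1 ≤ m) (hmk : m ≤ η.length) :
    ℓ ^ 2 * (η.length - m + 1) ≤
      ∑ ξ ∈ (η.sublists.toFinset.filter (fun ξ => ξ ≠ [] ∧ ξ <:+: η)).filter
        (fun ξ => ξ.length = m), occ (wpow η ℓ) ξ ^ 2 := by
  classical
  set S := (η.sublists.toFinset.filter (fun ξ => ξ ≠ [] ∧ ξ <:+: η)).filter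
        (fun ξ => ξ.length = m) with hS
  set K := η.length - m + 1 with hK
  have hcs : (∑ ξ ∈ S, occ (wpow η ℓ) ξ) ^ 2 ≤ S.card * ∑ ξ ∈ S, occ (wpow η ℓ) ξ ^ 2 :=
    sq_sum_le_card_mul_sum_sq
  have h1 : (ℓ * K) ^ 2 ≤ K * ∑ ξ ∈ S, occ (wpow η ℓ) ξ ^ 2 := by
    calc (ℓ * K) ^ 2 ≤ (∑ ξ ∈ S, occ (wpow η ℓ) ξ) ^ 2 :=
          Nat.pow_le_pow_left (sumB η ℓ m hℓ hm1 hmk) 2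
      _ ≤ S.card * ∑ ξ ∈ S, occ (wpow η ℓ) ξ ^ 2 := hcs
      _ ≤ K * ∑ ξ ∈ S, occ (wpow η ℓ) ξ ^ 2 :=
          Nat.mul_le_mul_right _ (cardA η m)
  have h2 : K * (ℓ ^ 2 * K) ≤ K * ∑ ξ ∈ S, occ (wpow η ℓ) ξ ^ 2 := by
    calc K * (ℓ ^ 2 * K) = (ℓ * K) ^ 2 := by ring
      _ ≤ _ := h1
  exact Nat.le_of_mul_le_mul_left h2 (by omega)

/-- For a word `η` of length `k` and `ℓ ≥ 1`, the sum of
`|η^ℓ|_ξ²` over all nonempty factors `ξ` of `η` is at least `k²ℓ²/2`. -/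
theorem sum_sq_occ_pow_ge (η : List Bool) (ℓ : ℕ) (hℓ : 1 ≤ ℓ) :
    η.length ^ 2 * ℓ ^ 2 ≤
      2 * ∑ ξ ∈ η.sublists.toFinset.filter (fun ξ => ξ ≠ [] ∧ ξ <:+: η),
        (occ (wpow η ℓ) ξ) ^ 2 := by
  classical
  set k := η.length with hk
  set F := η.sublists.toFinset.filter (fun ξ => ξ ≠ [] ∧ ξ <:+: η) with hF
  have hfib : ∑ ξ ∈ F, occ (wpow η ℓ) ξ ^ 2
      = ∑ m ∈ Finset.range (k + 1), ∑ ξ ∈ F.filter (fun ξ => ξ.length = m),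
          occ (wpow η ℓ) ξ ^ 2 := by
    refine (Finset.sum_fiberwise_of_maps_to ?_ _).symm
    intro ξ hξ
    simp only [hF, Finset.mem_filter, List.mem_toFinset, List.mem_sublists] at hξ
    exact Finset.mem_range.2 (Nat.lt_succ_of_le hξ.2.2.sublist.length_le)
  have hgauss : ∀ K : ℕ, 2 * (∑ i ∈ Finset.range K, (i + 1)) = K * (K + 1) := by
    intro K
    induction K with
    | zero => simp
    | succ n ih => rw [Finset.sum_range_succ, Nat.mul_add, ih]; ring
  have hgsum : 2 * ∑ m ∈ Finset.range (k + 1),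
      (if m = 0 then 0 else ℓ ^ 2 * (k - m + 1)) = ℓ ^ 2 * (k * (k + 1)) := by
    rw [Finset.sum_range_succ']
    simp only [Nat.succ_ne_zero, if_neg, if_pos, add_zero, reduceIte]
    have h1 : ∑ i ∈ Finset.range k, ℓ ^ 2 * (k - (i + 1) + 1)
        = ∑ i ∈ Finset.range k, ℓ ^ 2 * (i + 1) := by
      rw [← Finset.sum_range_reflect (fun i => ℓ ^ 2 * (i + 1)) k]
      refine Finset.sum_congr rfl fun i hi => ?_
      have := Finset.mem_range.1 hi
      congr 1
      omega
    rw [h1, ← Finset.mul_sum, ← mul_assoc, mul_comm 2 (ℓ ^ 2), mul_assoc, hgauss k]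
  have hbound : ∀ m ∈ Finset.range (k + 1),
      (if m = 0 then 0 else ℓ ^ 2 * (k - m + 1)) ≤
        ∑ ξ ∈ F.filter (fun ξ => ξ.length = m), occ (wpow η ℓ) ξ ^ 2 := by
    intro m hm
    by_cases h0 : m = 0
    · simp [h0]
    · rw [if_neg h0]
      exact key_bound η ℓ m hℓ (by omega) (by have := Finset.mem_range.1 hm; omega)
  calc k ^ 2 * ℓ ^ 2 = ℓ ^ 2 * k ^ 2 := by ring
    _ ≤ ℓ ^ 2 * (k * (k + 1)) := Nat.mul_le_mul_left _ (by nlinarith)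
    _ = 2 * ∑ m ∈ Finset.range (k + 1),
        (if m = 0 then 0 else ℓ ^ 2 * (k - m + 1)) := hgsum.symm
    _ ≤ 2 * ∑ m ∈ Finset.range (k + 1), ∑ ξ ∈ F.filter (fun ξ => ξ.length = m),
        occ (wpow η ℓ) ξ ^ 2 := Nat.mul_le_mul_left 2 (Finset.sum_le_sum hbound)
    _ = 2 * ∑ ξ ∈ F, occ (wpow η ℓ) ξ ^ 2 := by rw [hfib]
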